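/- For any integer n ≥ 100, m = ⌈√n⌉, and real s ≥ 2: E_{(n₁,…,n_m)∼μ_n^m}[ Σ_{i=1}^m n_i · max(log_s n_i, 1) ] ≤ (1/2)·n·log_s n + 4e·n/log₂ s + 2e²·s². -/

import Mathlib

open Finset

/-- Pivot list: p₀ = 1, then the sorted pivots, then p_m = n+1. -/
def pivotList (n : ℕ) (P : Finset ℕ) : List ℕ :=
  1 :: (P.sort (· ≤ ·)) ++ [n + 1]

/-- The i-th gap (bucket size) nᵢ = pᵢ − pᵢ₋₁, for i = 1,…,m. -/
def gap (n : ℕ) (P : Finset ℕ) (i : ℕ) : ℕ :=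
  (pivotList n P).getD i 0 - (pivotList n P).getD (i - 1) 0

/-- Sample space of μ_n^m : all (m−1)-element subsets of {2,…,n}. -/
def pivotSets (n m : ℕ) : Finset (Finset ℕ) :=
  (Finset.Icc 2 n).powersetCard (m - 1)

namespace Stmt5Aux

/-- number of pivots ≤ x -/
def cnt (P : Finset ℕ) (x : ℕ) : ℕ := (P.filter (· ≤ x)).card

lemma cnt_le_card (P : Finset ℕ) (x : ℕ) : cnt P x ≤ P.card :=
  Finset.card_filter_le _ _

lemma sorted_getElem_le_iff {l : List ℕ} (hl : l.Pairwise (· ≤ ·)) :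
    ∀ {j : ℕ}, (hj : j < l.length) → ∀ (x : ℕ),
      (l[j] ≤ x ↔ j < (l.filter (fun a => a ≤ x)).length) := by
  induction l with
  | nil => intro j hj; simp at hj
  | cons a t ih =>
    intro j hj x
    obtain ⟨ha, ht⟩ := List.pairwise_cons.mp hl
    by_cases hax : a ≤ x
    · rw [List.filter_cons_of_pos (by simpa using hax)]
      cases j with
      | zero => simpa using hax
      | succ k =>
        have hk : k < t.length := by simpa using hj
        simp only [List.getElem_cons_succ, List.length_cons]
        rw [ih ht hk x]
        omega
    · have hnil : t.filter (fun a => a ≤ x) = [] := by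
        rw [List.filter_eq_nil_iff]
        intro b hb
        simp only [decide_eq_true_eq]
        exact fun h => hax (le_trans (ha b hb) h)
      rw [List.filter_cons_of_neg (by simpa using hax), hnil]
      simp only [List.length_nil, Nat.not_lt_zero, iff_false]
      cases j with
      | zero => simpa using hax
      | succ k =>
        have hk : k < t.length := by simpa using hj
        simp only [List.getElem_cons_succ]
        intro hle
        exact hax (le_trans (ha _ (List.getElem_mem hk)) hle)

lemma cnt_eq (P : Finset ℕ) (x : ℕ) :
    cnt P x = ((P.sort (· ≤ ·)).filter (fun a => a ≤ x)).length := by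
  rw [cnt, ← List.toFinset_card_of_nodup ((P.sort_nodup (· ≤ ·)).filter _)]
  congr 1
  ext b
  simp [List.mem_filter, Finset.mem_sort]

lemma pl_getD_succ (n : ℕ) (P : Finset ℕ) (k : ℕ) :
    (pivotList n P).getD (k + 1) 0 = ((P.sort (· ≤ ·)) ++ [n + 1]).getD k 0 := by
  show ((1 :: (P.sort (· ≤ ·))) ++ [n + 1]).getD (k + 1) 0 = _
  rw [List.cons_append, List.getD_cons_succ]

lemma pl_getD_zero (n : ℕ) (P : Finset ℕ) : (pivotList n P).getD 0 0 = 1 := rfl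

lemma pl_getD_mid {n m : ℕ} {P : Finset ℕ} (hc : P.card = m - 1) {j : ℕ}
    (hj1 : 1 ≤ j) (hj2 : j ≤ m - 1) :
    ∃ (h : j - 1 < (P.sort (· ≤ ·)).length),
      (pivotList n P).getD j 0 = (P.sort (· ≤ ·))[j - 1] := by
  have hlen : (P.sort (· ≤ ·)).length = m - 1 := by rw [Finset.length_sort, hc]
  have h : j - 1 < (P.sort (· ≤ ·)).length := by omega
  refine ⟨h, ?_⟩
  obtain ⟨k, rfl⟩ : ∃ k, j = k + 1 := ⟨j - 1, by omega⟩
  rw [pl_getD_succ, List.getD_append _ _ _ _ (by simpa using h),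
    List.getD_eq_getElem _ _ (by simpa using h)]
  simp

lemma pl_getD_last {n m : ℕ} {P : Finset ℕ} (hm : 1 ≤ m) (hc : P.card = m - 1) :
    (pivotList n P).getD m 0 = n + 1 := by
  have hlen : (P.sort (· ≤ ·)).length = m - 1 := by rw [Finset.length_sort, hc]
  obtain ⟨k, rfl⟩ : ∃ k, m = k + 1 := ⟨m - 1, by omega⟩
  rw [pl_getD_succ, List.getD_append_right _ _ _ _ (by omega), hlen]
  simp

lemma pl_getD_bounds {n m : ℕ} {P : Finset ℕ} (hm : 1 ≤ m) (hc : P.card = m - 1)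
    (hsub : P ⊆ Finset.Icc 2 n) {j : ℕ} (hj : j ≤ m) :
    1 ≤ (pivotList n P).getD j 0 ∧ (pivotList n P).getD j 0 ≤ n + 1 := by
  rcases Nat.eq_zero_or_pos j with rfl | hj1
  · rw [pl_getD_zero]; omega
  rcases eq_or_lt_of_le hj with rfl | hjm
  · rw [pl_getD_last hm hc]; omega
  · obtain ⟨h, heq⟩ := pl_getD_mid (n := n) hc hj1 (by omega)
    rw [heq]
    have hmem : (P.sort (· ≤ ·))[j - 1] ∈ P := (Finset.mem_sort _).mp (List.getElem_mem h)
    have := hsub hmem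
    rw [Finset.mem_Icc] at this
    omega

lemma key {n m : ℕ} {P : Finset ℕ} (hm : 1 ≤ m) (hc : P.card = m - 1)
    {j x : ℕ} (hj : j ≤ m) (hx1 : 1 ≤ x) (hxn : x ≤ n) :
    ((pivotList n P).getD j 0 ≤ x ↔ j ≤ cnt P x) := by
  rcases Nat.eq_zero_or_pos j with rfl | hj1
  · rw [pl_getD_zero]
    exact iff_of_true hx1 (Nat.zero_le _)
  rcases lt_or_ge j m with hjm | hge
  swap
  · have hjm' : j = m := le_antisymm hj hge
    rw [hjm', pl_getD_last hm hc]
    have h1 : cnt P x ≤ m - 1 := hc ▸ cnt_le_card P x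
    constructor <;> omega
  · obtain ⟨h, heq⟩ := pl_getD_mid (n := n) hc hj1 (by omega)
    rw [heq, sorted_getElem_le_iff (P.pairwise_sort (· ≤ ·)) h x, ← cnt_eq]
    omega

lemma fib {n m : ℕ} {P : Finset ℕ} (hm : 1 ≤ m) (hc : P.card = m - 1)
    (hsub : P ⊆ Finset.Icc 2 n) {j : ℕ} (hj : j < m) :
    (Finset.Icc 1 n).filter (fun x => cnt P x = j)
      = Finset.Ico ((pivotList n P).getD j 0) ((pivotList n P).getD (j + 1) 0) := by
  ext x
  simp only [Finset.mem_filter, Finset.mem_Icc, Finset.mem_Ico]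
  constructor
  · rintro ⟨⟨hx1, hxn⟩, hcnt⟩
    refine ⟨(key hm hc (by omega) hx1 hxn).mpr (by omega), ?_⟩
    by_contra hcon
    push_neg at hcon
    have := (key hm hc (j := j + 1) (by omega) hx1 hxn).mp hcon
    omega
  · rintro ⟨hge, hlt⟩
    have hb1 := pl_getD_bounds hm hc hsub (j := j) (by omega)
    have hb2 := pl_getD_bounds hm hc hsub (j := j + 1) (by omega)
    have hx1 : 1 ≤ x := le_trans hb1.1 hge
    have hxn : x ≤ n := by omega
    have h1 := (key hm hc (j := j) (by omega) hx1 hxn).mp hge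
    have h2 : ¬ (j + 1 ≤ cnt P x) := fun hcon =>
      absurd ((key hm hc (j := j + 1) (by omega) hx1 hxn).mpr hcon) (by omega)
    exact ⟨⟨hx1, hxn⟩, by omega⟩

lemma card_fib {n m : ℕ} {P : Finset ℕ} (hm : 1 ≤ m) (hc : P.card = m - 1)
    (hsub : P ⊆ Finset.Icc 2 n) {j : ℕ} (hj : j < m) :
    ((Finset.Icc 1 n).filter (fun x => cnt P x = j)).card = gap n P (j + 1) := by
  rw [fib hm hc hsub hj, Nat.card_Ico, gap]
  simp

lemma sum_Icc_one {M : Type*} [AddCommMonoid M] (m : ℕ) (f : ℕ → M) :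
    ∑ i ∈ Finset.Icc 1 m, f i = ∑ j ∈ Finset.range m, f (j + 1) := by
  rw [← Finset.Ico_add_one_right_eq_Icc, Finset.sum_Ico_eq_sum_range]
  simp [Nat.add_comm]

lemma sum_gap {n m : ℕ} {P : Finset ℕ} (hm : 1 ≤ m) (hc : P.card = m - 1)
    (hsub : P ⊆ Finset.Icc 2 n) :
    ∑ i ∈ Finset.Icc 1 m, gap n P i = n := by
  have hmem : ∀ x ∈ Finset.Icc 1 n, cnt P x ∈ Finset.range m := by
    intro x _
    rw [Finset.mem_range]
    have := cnt_le_card P x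
    omega
  have h := Finset.card_eq_sum_card_fiberwise hmem
  rw [Nat.card_Icc] at h
  rw [sum_Icc_one]
  have hcong : ∀ j ∈ Finset.range m,
      gap n P (j + 1) = ((Finset.Icc 1 n).filter (fun x => cnt P x = j)).card := by
    intro j hj
    rw [card_fib hm hc hsub (Finset.mem_range.mp hj)]
  rw [Finset.sum_congr rfl hcong, ← h]
  omega

lemma sum_gap_sq {n m : ℕ} {P : Finset ℕ} (hm : 1 ≤ m) (hc : P.card = m - 1)
    (hsub : P ⊆ Finset.Icc 2 n) :
    ∑ i ∈ Finset.Icc 1 m, (gap n P i) ^ 2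
      = (((Finset.Icc 1 n) ×ˢ (Finset.Icc 1 n)).filter
          (fun q => cnt P q.1 = cnt P q.2)).card := by
  set S := ((Finset.Icc 1 n) ×ˢ (Finset.Icc 1 n)).filter
      (fun q => cnt P q.1 = cnt P q.2) with hS
  have hmem : ∀ q ∈ S, cnt P q.1 ∈ Finset.range m := by
    intro q _
    rw [Finset.mem_range]
    have := cnt_le_card P q.1
    omega
  have h := Finset.card_eq_sum_card_fiberwise hmem
  have hfib : ∀ j ∈ Finset.range m, S.filter (fun q => cnt P q.1 = j)
      = ((Finset.Icc 1 n).filter (fun x => cnt P x = j)) ×ˢ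
        ((Finset.Icc 1 n).filter (fun x => cnt P x = j)) := by
    intro j _
    ext q
    simp only [hS, Finset.mem_filter, Finset.mem_product]
    constructor
    · rintro ⟨⟨⟨h1, h2⟩, h3⟩, h4⟩
      exact ⟨⟨h1, h4⟩, ⟨h2, by omega⟩⟩
    · rintro ⟨⟨h1, h4⟩, ⟨h2, h5⟩⟩
      exact ⟨⟨⟨h1, h2⟩, by omega⟩, h4⟩
  rw [h, sum_Icc_one]
  apply Finset.sum_congr rfl
  intro j hj
  rw [hfib j hj, Finset.card_product, ← card_fib hm hc hsub (Finset.mem_range.mp hj), sq]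

lemma count_pairs_le {n m : ℕ} {x y : ℕ} (hx1 : 1 ≤ x) (hxy : x ≤ y) (hyn : y ≤ n) :
    ((pivotSets n m).filter (fun P => cnt P x = cnt P y)).card
      ≤ (n - 1 - (y - x)).choose (m - 1) := by
  have hIoc : Finset.Ioc x y ⊆ Finset.Icc 2 n := by
    intro a ha
    rw [Finset.mem_Ioc] at ha
    rw [Finset.mem_Icc]
    omega
  have hsub : ((pivotSets n m).filter (fun P => cnt P x = cnt P y))
      ⊆ (Finset.Icc 2 n \ Finset.Ioc x y).powersetCard (m - 1) := by
    intro P hP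
    rw [Finset.mem_filter] at hP
    obtain ⟨hP1, hP2⟩ := hP
    rw [pivotSets, Finset.mem_powersetCard] at hP1
    rw [Finset.mem_powersetCard]
    refine ⟨?_, hP1.2⟩
    intro p hp
    rw [Finset.mem_sdiff]
    refine ⟨hP1.1 hp, ?_⟩
    intro hpIoc
    rw [Finset.mem_Ioc] at hpIoc
    have hmono : P.filter (· ≤ x) ⊆ P.filter (· ≤ y) :=
      fun p hp => by
        simp only [Finset.mem_filter] at hp ⊢; exact ⟨hp.1, le_trans hp.2 hxy⟩
    have heq : P.filter (· ≤ x) = P.filter (· ≤ y) :=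
      Finset.eq_of_subset_of_card_le hmono (le_of_eq hP2.symm)
    have hpy : p ∈ P.filter (· ≤ y) := Finset.mem_filter.mpr ⟨hp, hpIoc.2⟩
    rw [← heq, Finset.mem_filter] at hpy
    have : p ≤ x := hpy.2
    omega
  calc ((pivotSets n m).filter (fun P => cnt P x = cnt P y)).card
      ≤ ((Finset.Icc 2 n \ Finset.Ioc x y).powersetCard (m - 1)).card :=
        Finset.card_le_card hsub
    _ = (n - 1 - (y - x)).choose (m - 1) := by
        rw [Finset.card_powersetCard, Finset.card_sdiff_of_subset hIoc, Nat.card_Icc, Nat.card_Ioc,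
          show n + 1 - 2 - (y - x) = n - 1 - (y - x) by omega]

lemma count_pairs_le' {n m : ℕ} {x y : ℕ} (hx : x ∈ Finset.Icc 1 n) (hy : y ∈ Finset.Icc 1 n) :
    ((pivotSets n m).filter (fun P => cnt P x = cnt P y)).card
      ≤ (n - 1 - ((y - x) + (x - y))).choose (m - 1) := by
  rw [Finset.mem_Icc] at hx hy
  rcases le_total x y with h | h
  · rw [show (y - x) + (x - y) = y - x by omega]
    exact count_pairs_le hx.1 h hy.2
  · have heq : (pivotSets n m).filter (fun P => cnt P x = cnt P y)
        = (pivotSets n m).filter (fun P => cnt P y = cnt P x) :=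
      Finset.filter_congr (fun P _ => eq_comm)
    rw [heq, show (y - x) + (x - y) = x - y by omega]
    exact count_pairs_le hy.1 h hx.2

lemma sum_range_choose' (n r : ℕ) :
    ∑ k ∈ Finset.range n, k.choose r = n.choose (r + 1) := by
  rcases Nat.eq_zero_or_pos n with rfl | hn
  · simp
  have h := Nat.sum_Icc_choose (n - 1) r
  rw [show n - 1 + 1 = n by omega] at h
  rw [← h]
  symm
  apply Finset.sum_subset
  · intro k hk
    rw [Finset.mem_Icc] at hk
    rw [Finset.mem_range]
    omega
  · intro k hk2 hk
    rw [Finset.mem_Icc] at hk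
    rw [Finset.mem_range] at hk2
    exact Nat.choose_eq_zero_of_lt (by omega)

lemma sum_choose_aux {n r : ℕ} (hn : 1 ≤ n) (g : ℕ → ℕ) (A : Finset ℕ)
    (inj : ∀ a ∈ A, ∀ b ∈ A, g a = g b → a = b) (hrange : ∀ y ∈ A, g y < n) :
    ∑ y ∈ A, (g y).choose r ≤ n.choose (r + 1) := by
  rw [← Finset.sum_image (g := g) (f := fun k => k.choose r) inj]
  rw [← sum_range_choose' n r]
  apply Finset.sum_le_sum_of_subset
  intro k hk
  rw [Finset.mem_image] at hk
  obtain ⟨y, hy, rfl⟩ := hk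
  rw [Finset.mem_range]
  exact hrange y hy

lemma G3 {n m x : ℕ} (hm : 1 ≤ m) (hx1 : 1 ≤ x) (hxn : x ≤ n) :
    ∑ y ∈ Finset.Icc 1 n, (n - 1 - ((y - x) + (x - y))).choose (m - 1)
      ≤ 2 * n.choose m := by
  have hn1 : 1 ≤ n := le_trans hx1 hxn
  have h1 : ∑ y ∈ Finset.Icc 1 x, (n - 1 - ((y - x) + (x - y))).choose (m - 1)
      ≤ n.choose m := by
    have := sum_choose_aux (r := m - 1) hn1 (fun y => n - 1 - (x - y)) (Finset.Icc 1 x)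
      (by intro a ha b hb hab; rw [Finset.mem_Icc] at ha hb; omega)
      (by intro y hy; rw [Finset.mem_Icc] at hy; omega)
    rw [show m - 1 + 1 = m by omega] at this
    refine le_trans (le_of_eq ?_) this
    apply Finset.sum_congr rfl
    intro y hy
    rw [Finset.mem_Icc] at hy
    congr 1
    omega
  have h2 : ∑ y ∈ Finset.Icc x n, (n - 1 - ((y - x) + (x - y))).choose (m - 1)
      ≤ n.choose m := by
    have := sum_choose_aux (r := m - 1) hn1 (fun y => n - 1 - (y - x)) (Finset.Icc x n)
      (by intro a ha b hb hab; rw [Finset.mem_Icc] at ha hb; omega)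
      (by intro y hy; rw [Finset.mem_Icc] at hy; omega)
    rw [show m - 1 + 1 = m by omega] at this
    refine le_trans (le_of_eq ?_) this
    apply Finset.sum_congr rfl
    intro y hy
    rw [Finset.mem_Icc] at hy
    congr 1
    omega
  have hunion : Finset.Icc 1 n = Finset.Icc 1 x ∪ Finset.Icc x n := by
    ext a
    simp only [Finset.mem_union, Finset.mem_Icc]
    omega
  have hui := Finset.sum_union_inter (s₁ := Finset.Icc 1 x) (s₂ := Finset.Icc x n)
    (f := fun y => (n - 1 - ((y - x) + (x - y))).choose (m - 1))
  rw [← hunion] at hui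
  omega

lemma G1 {n m : ℕ} (hm : 1 ≤ m) (hn : 1 ≤ n) :
    ∑ P ∈ pivotSets n m, ∑ i ∈ Finset.Icc 1 m, (gap n P i) ^ 2
      ≤ n * (2 * n.choose m) := by
  have hstep : ∀ P ∈ pivotSets n m, ∑ i ∈ Finset.Icc 1 m, (gap n P i) ^ 2
      = ∑ q ∈ (Finset.Icc 1 n ×ˢ Finset.Icc 1 n),
          if cnt P q.1 = cnt P q.2 then 1 else 0 := by
    intro P hP
    rw [pivotSets, Finset.mem_powersetCard] at hP
    rw [sum_gap_sq hm hP.2 hP.1, Finset.card_filter]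
  rw [Finset.sum_congr rfl hstep, Finset.sum_comm]
  have hq : ∀ q ∈ (Finset.Icc 1 n ×ˢ Finset.Icc 1 n),
      (∑ P ∈ pivotSets n m, if cnt P q.1 = cnt P q.2 then 1 else 0)
        ≤ (n - 1 - ((q.2 - q.1) + (q.1 - q.2))).choose (m - 1) := by
    intro q hq
    rw [← Finset.card_filter]
    rw [Finset.mem_product] at hq
    exact count_pairs_le' hq.1 hq.2
  calc ∑ q ∈ (Finset.Icc 1 n ×ˢ Finset.Icc 1 n),
        (∑ P ∈ pivotSets n m, if cnt P q.1 = cnt P q.2 then 1 else 0)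
      ≤ ∑ q ∈ (Finset.Icc 1 n ×ˢ Finset.Icc 1 n),
          (n - 1 - ((q.2 - q.1) + (q.1 - q.2))).choose (m - 1) :=
        Finset.sum_le_sum hq
    _ = ∑ x ∈ Finset.Icc 1 n, ∑ y ∈ Finset.Icc 1 n,
          (n - 1 - ((y - x) + (x - y))).choose (m - 1) := by
        rw [Finset.sum_product]
    _ ≤ ∑ x ∈ Finset.Icc 1 n, 2 * n.choose m := by
        apply Finset.sum_le_sum
        intro x hx
        rw [Finset.mem_Icc] at hx
        exact G3 hm hx.1 hx.2
    _ = n * (2 * n.choose m) := by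
        rw [Finset.sum_const, Nat.card_Icc, smul_eq_mul,
          show n + 1 - 1 = n from rfl]

end Stmt5Aux

set_option maxHeartbeats 1600000 in
open Stmt5Aux in
theorem stmt_5 (n : ℕ) (hn : 100 ≤ n) (m : ℕ) (hm : m = ⌈Real.sqrt n⌉₊)
    (s : ℝ) (hs : 2 ≤ s) :
    (∑ P ∈ pivotSets n m, ∑ i ∈ Finset.Icc 1 m,
        (gap n P i : ℝ) * max (Real.logb s (gap n P i)) 1) / (pivotSets n m).card
      ≤ (1 / 2) * n * Real.logb s n + 4 * Real.exp 1 * n / Real.logb 2 s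
        + 2 * (Real.exp 1) ^ 2 * s ^ 2 := by
  have hs1 : (1 : ℝ) < s := by linarith
  have hnR : (100 : ℝ) ≤ (n : ℝ) := by exact_mod_cast hn
  have hnpos : (0 : ℝ) < n := by linarith
  -- basic facts about m
  have hsqrt_le_m : Real.sqrt n ≤ (m : ℝ) := hm ▸ Nat.le_ceil _
  have hsqrt_pos : (0 : ℝ) < Real.sqrt n := Real.sqrt_pos.mpr hnpos
  have h10 : (10 : ℝ) ≤ Real.sqrt n := by
    rw [show (10 : ℝ) = Real.sqrt 100 by
      rw [show (100 : ℝ) = 10 ^ 2 by norm_num, Real.sqrt_sq (by norm_num)]]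
    exact Real.sqrt_le_sqrt hnR
  have hm2 : 2 ≤ m := by
    have : (2 : ℝ) ≤ (m : ℝ) := by linarith
    exact_mod_cast this
  have hm1 : 1 ≤ m := by omega
  have hmn : m ≤ n := by
    rw [hm, Nat.ceil_le]
    calc Real.sqrt n ≤ Real.sqrt ((n : ℝ) ^ 2) := by
          apply Real.sqrt_le_sqrt
          nlinarith
      _ = (n : ℝ) := Real.sqrt_sq (by positivity)
  -- cardinality of the sample space
  have hD : (pivotSets n m).card = (n - 1).choose (m - 1) := by
    rw [pivotSets, Finset.card_powersetCard, Nat.card_Icc,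
      show n + 1 - 2 = n - 1 by omega]
  have hDpos : 0 < (pivotSets n m).card := by
    rw [hD]
    exact Nat.choose_pos (by omega)
  have hDposR : (0 : ℝ) < ((pivotSets n m).card : ℝ) := by exact_mod_cast hDpos
  have hlogs_pos : (0 : ℝ) < Real.log s := Real.log_pos hs1
  have hlogb2s_pos : (0 : ℝ) < Real.logb 2 s := by
    rw [Real.logb]
    apply div_pos (Real.log_pos hs1) (Real.log_pos (by norm_num))
  have hlogb_ssq : Real.logb s (s ^ 2) = 2 := by
    rw [Real.logb, Real.log_pow]
    rw [mul_div_assoc, div_self (ne_of_gt hlogs_pos)]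
    norm_num
  have hexp1 : (1 : ℝ) ≤ Real.exp 1 := Real.one_le_exp (by norm_num)
  have hlogbn_nonneg : (0 : ℝ) ≤ Real.logb s n := Real.logb_nonneg hs1 (by linarith)
  have hterm2_nonneg : (0 : ℝ) ≤ 4 * Real.exp 1 * n / Real.logb 2 s := by positivity
  rcases le_or_gt (n : ℝ) (s ^ 2) with hcase | hcase
  · -- easy case : s² ≥ n
    have hTbound : ∀ P ∈ pivotSets n m,
        (∑ i ∈ Finset.Icc 1 m, (gap n P i : ℝ) * max (Real.logb s (gap n P i)) 1)
          ≤ 2 * n := by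
      intro P hP
      rw [pivotSets, Finset.mem_powersetCard] at hP
      have hsum := sum_gap hm1 hP.2 hP.1
      have hgapn : ∀ i ∈ Finset.Icc 1 m, gap n P i ≤ n := by
        intro i hi
        calc gap n P i ≤ ∑ i ∈ Finset.Icc 1 m, gap n P i :=
              Finset.single_le_sum (fun _ _ => Nat.zero_le _) hi
          _ = n := hsum
      have hle : ∀ i ∈ Finset.Icc 1 m,
          (gap n P i : ℝ) * max (Real.logb s (gap n P i)) 1 ≤ (gap n P i : ℝ) * 2 := by
        intro i hi
        apply mul_le_mul_of_nonneg_left _ (Nat.cast_nonneg _)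
        apply max_le _ (by norm_num)
        rcases Nat.eq_zero_or_pos (gap n P i) with hz | hpos
        · rw [hz]
          simp [Real.logb_zero]
        · rw [← hlogb_ssq]
          apply Real.logb_le_logb_of_le hs1 (by exact_mod_cast hpos)
          calc (gap n P i : ℝ) ≤ (n : ℝ) := by exact_mod_cast hgapn i hi
            _ ≤ s ^ 2 := hcase
      calc (∑ i ∈ Finset.Icc 1 m, (gap n P i : ℝ) * max (Real.logb s (gap n P i)) 1)
          ≤ ∑ i ∈ Finset.Icc 1 m, (gap n P i : ℝ) * 2 := Finset.sum_le_sum hle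
        _ = (∑ i ∈ Finset.Icc 1 m, (gap n P i : ℝ)) * 2 := by rw [Finset.sum_mul]
        _ = 2 * n := by
            rw [← Nat.cast_sum, hsum]
            ring
    have hS : (∑ P ∈ pivotSets n m, ∑ i ∈ Finset.Icc 1 m,
        (gap n P i : ℝ) * max (Real.logb s (gap n P i)) 1)
          ≤ ((pivotSets n m).card : ℝ) * (2 * n) := by
      calc (∑ P ∈ pivotSets n m, ∑ i ∈ Finset.Icc 1 m,
          (gap n P i : ℝ) * max (Real.logb s (gap n P i)) 1)
          ≤ ∑ _P ∈ pivotSets n m, 2 * (n : ℝ) := Finset.sum_le_sum hTbound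
        _ = ((pivotSets n m).card : ℝ) * (2 * n) := by
            rw [Finset.sum_const, nsmul_eq_mul]
    rw [div_le_iff₀ hDposR]
    have hfinal : 2 * (n : ℝ) ≤ (1 / 2) * n * Real.logb s n
        + 4 * Real.exp 1 * n / Real.logb 2 s + 2 * (Real.exp 1) ^ 2 * s ^ 2 := by
      have h1 : (0 : ℝ) ≤ (1 / 2) * n * Real.logb s n := by positivity
      have he2 : (1 : ℝ) ≤ (Real.exp 1) ^ 2 := by nlinarith [hexp1]
      have h3 : 2 * (n : ℝ) ≤ 2 * (Real.exp 1) ^ 2 * s ^ 2 := by nlinarith [he2, hcase, hnpos]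
      linarith
    calc (∑ P ∈ pivotSets n m, ∑ i ∈ Finset.Icc 1 m,
        (gap n P i : ℝ) * max (Real.logb s (gap n P i)) 1)
        ≤ ((pivotSets n m).card : ℝ) * (2 * n) := hS
      _ = (2 * (n : ℝ)) * ((pivotSets n m).card : ℝ) := by ring
      _ ≤ ((1 / 2) * n * Real.logb s n + 4 * Real.exp 1 * n / Real.logb 2 s
            + 2 * (Real.exp 1) ^ 2 * s ^ 2) * ((pivotSets n m).card : ℝ) := by
          apply mul_le_mul_of_nonneg_right hfinal (le_of_lt hDposR)
  · -- main case : s² < n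
    have hssq_pos : (0 : ℝ) < s ^ 2 := by positivity
    have hlogbn2 : (2 : ℝ) ≤ Real.logb s n := by
      rw [← hlogb_ssq]
      exact Real.logb_le_logb_of_le hs1 hssq_pos (le_of_lt hcase)
    -- pointwise bound
    have hpoint : ∀ k : ℕ, max (Real.logb s k) 1
        ≤ (1 / 2) * Real.logb s n + (k : ℝ) / (Real.sqrt n * Real.log s) := by
      intro k
      have hterm2 : (0 : ℝ) ≤ (k : ℝ) / (Real.sqrt n * Real.log s) := by positivity
      apply max_le
      · rcases Nat.eq_zero_or_pos k with rfl | hk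
        · simp only [Nat.cast_zero, Real.logb_zero]
          linarith
        · have hkpos : (0 : ℝ) < (k : ℝ) := by exact_mod_cast hk
          have h2 : (1 / 2) * Real.logb s n = Real.log (Real.sqrt n) / Real.log s := by
            rw [Real.log_sqrt (le_of_lt hnpos), Real.logb]
            ring
          have h4 : Real.log ((k : ℝ) / Real.sqrt n) ≤ (k : ℝ) / Real.sqrt n := by
            have := Real.log_le_sub_one_of_pos (x := (k : ℝ) / Real.sqrt n) (by positivity)
            linarith
          have h5 : Real.log (k : ℝ) ≤ Real.log (Real.sqrt n) + (k : ℝ) / Real.sqrt n := by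
            rw [Real.log_div (ne_of_gt hkpos) (ne_of_gt hsqrt_pos)] at h4
            linarith
          rw [Real.logb, h2]
          calc Real.log (k : ℝ) / Real.log s
              ≤ (Real.log (Real.sqrt n) + (k : ℝ) / Real.sqrt n) / Real.log s :=
                (div_le_div_iff_of_pos_right hlogs_pos).mpr h5
            _ = Real.log (Real.sqrt n) / Real.log s
                + (k : ℝ) / (Real.sqrt n * Real.log s) := by
                rw [add_div, div_div]
      · linarith
    -- per-P bound
    have hTB : ∀ P ∈ pivotSets n m,
        (∑ i ∈ Finset.Icc 1 m, (gap n P i : ℝ) * max (Real.logb s (gap n P i)) 1)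
          ≤ (1 / 2) * n * Real.logb s n
            + ((∑ i ∈ Finset.Icc 1 m, (gap n P i) ^ 2 : ℕ) : ℝ)
              / (Real.sqrt n * Real.log s) := by
      intro P hP
      rw [pivotSets, Finset.mem_powersetCard] at hP
      have hsum := sum_gap hm1 hP.2 hP.1
      have hle : ∀ i ∈ Finset.Icc 1 m,
          (gap n P i : ℝ) * max (Real.logb s (gap n P i)) 1
            ≤ (gap n P i : ℝ) * ((1 / 2) * Real.logb s n)
              + ((gap n P i : ℝ)) ^ 2 / (Real.sqrt n * Real.log s) := by
        intro i _
        have h0 : (0 : ℝ) ≤ (gap n P i : ℝ) := Nat.cast_nonneg _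
        calc (gap n P i : ℝ) * max (Real.logb s (gap n P i)) 1
            ≤ (gap n P i : ℝ) * ((1 / 2) * Real.logb s n
                + (gap n P i : ℝ) / (Real.sqrt n * Real.log s)) :=
              mul_le_mul_of_nonneg_left (hpoint (gap n P i)) h0
          _ = (gap n P i : ℝ) * ((1 / 2) * Real.logb s n)
              + ((gap n P i : ℝ)) ^ 2 / (Real.sqrt n * Real.log s) := by
              ring
      calc (∑ i ∈ Finset.Icc 1 m, (gap n P i : ℝ) * max (Real.logb s (gap n P i)) 1)
          ≤ ∑ i ∈ Finset.Icc 1 m, ((gap n P i : ℝ) * ((1 / 2) * Real.logb s n)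
              + ((gap n P i : ℝ)) ^ 2 / (Real.sqrt n * Real.log s)) :=
            Finset.sum_le_sum hle
        _ = (∑ i ∈ Finset.Icc 1 m, (gap n P i : ℝ)) * ((1 / 2) * Real.logb s n)
            + (∑ i ∈ Finset.Icc 1 m, ((gap n P i : ℝ)) ^ 2)
              / (Real.sqrt n * Real.log s) := by
            rw [Finset.sum_add_distrib, Finset.sum_mul, Finset.sum_div]
        _ = (1 / 2) * n * Real.logb s n
            + ((∑ i ∈ Finset.Icc 1 m, (gap n P i) ^ 2 : ℕ) : ℝ)
              / (Real.sqrt n * Real.log s) := by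
            rw [← Nat.cast_sum _ (gap n P), hsum]
            push_cast
            ring
    -- sum over all P
    set A : ℕ := ∑ P ∈ pivotSets n m, ∑ i ∈ Finset.Icc 1 m, (gap n P i) ^ 2 with hA
    have hApos : (0 : ℝ) ≤ (A : ℝ) := Nat.cast_nonneg _
    have hS : (∑ P ∈ pivotSets n m, ∑ i ∈ Finset.Icc 1 m,
        (gap n P i : ℝ) * max (Real.logb s (gap n P i)) 1)
          ≤ ((pivotSets n m).card : ℝ) * ((1 / 2) * n * Real.logb s n)
            + (A : ℝ) / (Real.sqrt n * Real.log s) := by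
      calc (∑ P ∈ pivotSets n m, ∑ i ∈ Finset.Icc 1 m,
          (gap n P i : ℝ) * max (Real.logb s (gap n P i)) 1)
          ≤ ∑ P ∈ pivotSets n m, ((1 / 2) * n * Real.logb s n
              + ((∑ i ∈ Finset.Icc 1 m, (gap n P i) ^ 2 : ℕ) : ℝ)
                / (Real.sqrt n * Real.log s)) := Finset.sum_le_sum hTB
        _ = ((pivotSets n m).card : ℝ) * ((1 / 2) * n * Real.logb s n)
            + (A : ℝ) / (Real.sqrt n * Real.log s) := by
            rw [Finset.sum_add_distrib, Finset.sum_const, nsmul_eq_mul, ← Finset.sum_div,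
              hA, Nat.cast_sum]
    -- bound on A
    have hG1 : A ≤ n * (2 * n.choose m) := G1 hm1 (by omega)
    -- the clean identity : n * (n-1).choose (m-1) = n.choose m * m
    have hid2 : n * ((n - 1).choose (m - 1)) = (n.choose m) * m := by
      have := Nat.add_one_mul_choose_eq (n - 1) (m - 1)
      rw [show n - 1 + 1 = n by omega, show m - 1 + 1 = m by omega] at this
      exact this
    have hidR : (n : ℝ) * ((pivotSets n m).card : ℝ) = (n.choose m : ℝ) * m := by
      rw [hD]
      exact_mod_cast congrArg (Nat.cast (R := ℝ)) hid2
    have hAR : (A : ℝ) ≤ 2 * n * (n.choose m : ℝ) := by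
      have : (A : ℝ) ≤ (n * (2 * n.choose m) : ℕ) := by exact_mod_cast hG1
      push_cast at this
      linarith
    have hchoose_nonneg : (0 : ℝ) ≤ (n.choose m : ℝ) := Nat.cast_nonneg _
    have hmR_pos : (0 : ℝ) < (m : ℝ) := by
      have : (0 : ℕ) < m := by omega
      exact_mod_cast this
    -- A * √n ≤ 2 n² D
    have hA2 : (A : ℝ) * Real.sqrt n ≤ 2 * (n : ℝ) ^ 2 * ((pivotSets n m).card : ℝ) := by
      have h1 : (A : ℝ) * Real.sqrt n ≤ 2 * n * (n.choose m : ℝ) * (m : ℝ) := by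
        calc (A : ℝ) * Real.sqrt n ≤ (2 * n * (n.choose m : ℝ)) * Real.sqrt n := by
              apply mul_le_mul_of_nonneg_right hAR (le_of_lt hsqrt_pos)
          _ ≤ (2 * n * (n.choose m : ℝ)) * (m : ℝ) := by
              apply mul_le_mul_of_nonneg_left hsqrt_le_m
              positivity
      calc (A : ℝ) * Real.sqrt n ≤ 2 * n * (n.choose m : ℝ) * (m : ℝ) := h1
        _ = 2 * n * ((n.choose m : ℝ) * m) := by ring
        _ = 2 * n * ((n : ℝ) * ((pivotSets n m).card : ℝ)) := by rw [← hidR]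
        _ = 2 * (n : ℝ) ^ 2 * ((pivotSets n m).card : ℝ) := by ring
    have hsn : Real.sqrt n * Real.sqrt n = (n : ℝ) := Real.mul_self_sqrt (le_of_lt hnpos)
    -- A / (√n log s) ≤ 2 n D / log s
    have hA3 : (A : ℝ) ≤ 2 * (n : ℝ) ^ 2 * ((pivotSets n m).card : ℝ) / Real.sqrt n :=
      (le_div_iff₀ hsqrt_pos).mpr hA2
    have hden : Real.sqrt n * (Real.sqrt n * Real.log s) = (n : ℝ) * Real.log s := by
      rw [← mul_assoc, hsn]
    have hXa : (A : ℝ) / (Real.sqrt n * Real.log s)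
        ≤ (2 * (n : ℝ) ^ 2 * ((pivotSets n m).card : ℝ) / Real.sqrt n)
            / (Real.sqrt n * Real.log s) :=
      (div_le_div_iff_of_pos_right (by positivity)).mpr hA3
    have hXb : (2 * (n : ℝ) ^ 2 * ((pivotSets n m).card : ℝ) / Real.sqrt n)
          / (Real.sqrt n * Real.log s)
        = 2 * n * ((pivotSets n m).card : ℝ) / Real.log s := by
      rw [div_div, hden,
        show 2 * (n : ℝ) ^ 2 * ((pivotSets n m).card : ℝ)
          = (n : ℝ) * (2 * n * ((pivotSets n m).card : ℝ)) by ring,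
        mul_div_mul_left _ _ (ne_of_gt hnpos)]
    have hX : (A : ℝ) / (Real.sqrt n * Real.log s)
        ≤ 2 * n * ((pivotSets n m).card : ℝ) / Real.log s := hXb ▸ hXa
    -- 2 n D / log s ≤ (4 e n / logb 2 s) * D
    have hY : 2 * (n : ℝ) * ((pivotSets n m).card : ℝ) / Real.log s
        ≤ (4 * Real.exp 1 * n / Real.logb 2 s) * ((pivotSets n m).card : ℝ) := by
      have hlog2 : (0.6931471803 : ℝ) < Real.log 2 := Real.log_two_gt_d9
      have hexp : (2.7182818283 : ℝ) < Real.exp 1 := Real.exp_one_gt_d9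
      have h2el2 : (2 : ℝ) ≤ 4 * Real.exp 1 * Real.log 2 := by nlinarith
      have hD0 : (0 : ℝ) ≤ ((pivotSets n m).card : ℝ) := le_of_lt hDposR
      have hrw : 4 * Real.exp 1 * (n : ℝ) / Real.logb 2 s
          = 4 * Real.exp 1 * (n : ℝ) * Real.log 2 / Real.log s := by
        rw [Real.logb, div_div_eq_mul_div]
      have key2 : 2 * (n : ℝ) * ((pivotSets n m).card : ℝ)
          ≤ 4 * Real.exp 1 * (n : ℝ) * Real.log 2 * ((pivotSets n m).card : ℝ) := by
        have hnd : (0 : ℝ) ≤ (n : ℝ) * ((pivotSets n m).card : ℝ) :=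
          mul_nonneg (le_of_lt hnpos) hD0
        nlinarith [mul_nonneg (sub_nonneg.mpr h2el2) hnd]
      rw [hrw, div_mul_eq_mul_div]
      exact (div_le_div_iff_of_pos_right hlogs_pos).mpr key2
    rw [div_le_iff₀ hDposR]
    have hs2term : (0 : ℝ) ≤ 2 * (Real.exp 1) ^ 2 * s ^ 2 := by positivity
    calc (∑ P ∈ pivotSets n m, ∑ i ∈ Finset.Icc 1 m,
        (gap n P i : ℝ) * max (Real.logb s (gap n P i)) 1)
        ≤ ((pivotSets n m).card : ℝ) * ((1 / 2) * n * Real.logb s n)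
            + (A : ℝ) / (Real.sqrt n * Real.log s) := hS
      _ ≤ ((pivotSets n m).card : ℝ) * ((1 / 2) * n * Real.logb s n)
            + (4 * Real.exp 1 * n / Real.logb 2 s) * ((pivotSets n m).card : ℝ) := by
          linarith [le_trans hX hY]
      _ ≤ ((1 / 2) * n * Real.logb s n + 4 * Real.exp 1 * n / Real.logb 2 s
            + 2 * (Real.exp 1) ^ 2 * s ^ 2) * ((pivotSets n m).card : ℝ) := by
          nlinarith [hs2term, hDposR]
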